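/- arXiv:2503.14646 — 2 statements merged into one kernel-verified Lean document; each statement's English description precedes it below -/
import Mathlib

section
/- The convex conjugate (Legendre–Fenchel transform) of the map τ ↦ ln(e^{aτ} + e^{bτ}) on ℝ, for a < b, evaluated at x ∈ (a,b), equals ((x−a)/D) ln((x−a)/D) + ((b−x)/D) ln((b−x)/D) with D = b−a; i.e., sup_{τ∈ℝ} [xτ − ln(e^{aτ}+e^{bτ})] = ψ(x) for x ∈ (a,b). -/
/-- For `a < b` and `x ∈ (a,b)`, the Legendre–Fenchel transform of
`τ ↦ ln(e^{aτ} + e^{bτ})` at `x` equals the Fermi–Dirac entropy: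
`sup_τ [xτ − ln(e^{aτ}+e^{bτ})] = ((x−a)/D) ln((x−a)/D) + ((b−x)/D) ln((b−x)/D)`,
`D = b − a`. -/
theorem stmt_8 (a b : ℝ) (hab : a < b) (x : ℝ) (hx : x ∈ Set.Ioo a b) :
    sSup (Set.range fun τ : ℝ =>
        x * τ - Real.log (Real.exp (a * τ) + Real.exp (b * τ)))
      = ((x - a) / (b - a)) * Real.log ((x - a) / (b - a))
        + ((b - x) / (b - a)) * Real.log ((b - x) / (b - a)) := by
  obtain ⟨hax, hxb⟩ := hx
  have hD : (0:ℝ) < b - a := sub_pos.2 hab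
  set p : ℝ := (x - a) / (b - a) with hp_def
  set q : ℝ := (b - x) / (b - a) with hq_def
  have hp : 0 < p := div_pos (sub_pos.2 hax) hD
  have hq : 0 < q := div_pos (sub_pos.2 hxb) hD
  have hpq : p + q = 1 := by
    rw [hp_def, hq_def, ← add_div]; exact (div_eq_one_iff_eq hD.ne').2 (by ring)
  have hxa : x - a = p * (b - a) := by rw [hp_def, div_mul_cancel₀ _ hD.ne']
  have hbx : b - x = q * (b - a) := by rw [hq_def, div_mul_cancel₀ _ hD.ne']
  have hxw : x = q * a + p * b := by
    have : q * a + p * b = ((b - x) * a + (x - a) * b) / (b - a) := by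
      rw [eq_div_iff hD.ne']; linear_combination -(a * hbx) - b * hxa
    rw [this]
    field_simp
    ring
  -- upper bound
  have hub : ∀ τ : ℝ, x * τ - Real.log (Real.exp (a * τ) + Real.exp (b * τ))
      ≤ p * Real.log p + q * Real.log q := by
    intro τ
    have hgeom := Real.geom_mean_le_arith_mean2_weighted hq.le hp.le
      (le_of_lt (div_pos (Real.exp_pos (a*τ)) hq))
      (le_of_lt (div_pos (Real.exp_pos (b*τ)) hp))
      (by linarith)
    have hsum : q * (Real.exp (a*τ) / q) + p * (Real.exp (b*τ) / p)
        = Real.exp (a*τ) + Real.exp (b*τ) := by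
      field_simp
    rw [hsum] at hgeom
    have hposl : 0 < (Real.exp (a*τ) / q) ^ q * (Real.exp (b*τ) / p) ^ p :=
      mul_pos (Real.rpow_pos_of_pos (div_pos (Real.exp_pos _) hq) _)
        (Real.rpow_pos_of_pos (div_pos (Real.exp_pos _) hp) _)
    have hlog := Real.log_le_log hposl hgeom
    rw [Real.log_mul (ne_of_gt (Real.rpow_pos_of_pos (div_pos (Real.exp_pos _) hq) _))
        (ne_of_gt (Real.rpow_pos_of_pos (div_pos (Real.exp_pos _) hp) _)),
      Real.log_rpow (div_pos (Real.exp_pos _) hq),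
      Real.log_rpow (div_pos (Real.exp_pos _) hp),
      Real.log_div (Real.exp_ne_zero _) (ne_of_gt hq),
      Real.log_div (Real.exp_ne_zero _) (ne_of_gt hp),
      Real.log_exp, Real.log_exp] at hlog
    have hx2 : x * τ = q * (a * τ) + p * (b * τ) := by rw [hxw]; ring
    nlinarith [hlog, hx2]
  -- the value is attained
  set τ₀ : ℝ := (Real.log p - Real.log q) / (b - a) with hτ₀
  have hattain : x * τ₀ - Real.log (Real.exp (a * τ₀) + Real.exp (b * τ₀))
      = p * Real.log p + q * Real.log q := by
    have hexp : Real.exp (a * τ₀) + Real.exp (b * τ₀)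
        = Real.exp (a * τ₀) / q := by
      have h1 : Real.exp (b * τ₀) = Real.exp (a * τ₀) * Real.exp ((b - a) * τ₀) := by
        rw [← Real.exp_add]; ring_nf
      have h2 : Real.exp ((b - a) * τ₀) = p / q := by
        rw [hτ₀]
        rw [mul_div_cancel₀ _ (ne_of_gt hD)]
        rw [Real.exp_sub, Real.exp_log hp, Real.exp_log hq]
      rw [h1, h2]
      field_simp
      nlinarith [hpq, Real.exp_pos (a * τ₀)]
    rw [hexp, Real.log_div (Real.exp_ne_zero _) (ne_of_gt hq), Real.log_exp]
    have : x * τ₀ - (a * τ₀ - Real.log q) = (x - a) * τ₀ + Real.log q := by ring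
    have hq1 : q = 1 - p := by linarith
    rw [this, hxa, hτ₀, hq1]
    field_simp
    ring
  have hne : (Set.range fun τ : ℝ =>
      x * τ - Real.log (Real.exp (a * τ) + Real.exp (b * τ))).Nonempty :=
    ⟨_, ⟨0, rfl⟩⟩
  have hbdd : ∀ y ∈ (Set.range fun τ : ℝ =>
      x * τ - Real.log (Real.exp (a * τ) + Real.exp (b * τ))),
      y ≤ p * Real.log p + q * Real.log q := by
    rintro y ⟨τ, rfl⟩
    exact hub τ
  apply le_antisymm
  · exact csSup_le hne hbdd
  · exact le_csSup ⟨_, fun y hy => hbdd y hy⟩ ⟨τ₀, hattain⟩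
end

section
/- (Duality for entropy minimization) Let A be an N×m matrix, y ∈ ℝ^N, a_j < b_j, and suppose λ* is a maximizer of Σ(y,λ) = ⟨λ,y⟩ − M(Aᵗλ) over ℝ^N. Then x* given componentwise by x*_j = (a_j e^{a_j(Aᵗλ*)_j} + b_j e^{b_j(Aᵗλ*)_j})/(e^{a_j(Aᵗλ*)_j} + e^{b_j(Aᵗλ*)_j}) minimizes Ψ(x) over {x ∈ ∏(a_j,b_j) : Ax = y}, and Ψ(x*) = Σ(y, λ*). -/
open Matrix

lemma gibbs (p q u v : ℝ) (hp : 0 < p) (hq : 0 < q) (hpq : p + q = 1) :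
    p*v + q*u - Real.log (Real.exp u + Real.exp v) ≤
      p * Real.log p + q * Real.log q := by
  set S := Real.exp u + Real.exp v with hS
  have hSpos : 0 < S := by positivity
  set P := Real.exp v / S with hPdef
  set Q := Real.exp u / S with hQdef
  have hP : 0 < P := by positivity
  have hQ : 0 < Q := by positivity
  have hPQ : P + Q = 1 := by rw [hPdef, hQdef]; field_simp; ring
  have hlogP : Real.log P = v - Real.log S := by
    rw [hPdef, Real.log_div (Real.exp_ne_zero v) hSpos.ne', Real.log_exp]
  have hlogQ : Real.log Q = u - Real.log S := by
    rw [hQdef, Real.log_div (Real.exp_ne_zero u) hSpos.ne', Real.log_exp]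
  have h1 : p * (Real.log P - Real.log p) ≤ P - p := by
    have := Real.log_le_sub_one_of_pos (div_pos hP hp)
    rw [Real.log_div hP.ne' hp.ne'] at this
    have h2 : p * (Real.log P - Real.log p) ≤ p * (P / p - 1) :=
      mul_le_mul_of_nonneg_left this hp.le
    calc p * (Real.log P - Real.log p) ≤ p * (P / p - 1) := h2
      _ = P - p := by field_simp
  have h2 : q * (Real.log Q - Real.log q) ≤ Q - q := by
    have := Real.log_le_sub_one_of_pos (div_pos hQ hq)
    rw [Real.log_div hQ.ne' hq.ne'] at this
    have h2 : q * (Real.log Q - Real.log q) ≤ q * (Q / q - 1) :=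
      mul_le_mul_of_nonneg_left this hq.le
    calc q * (Real.log Q - Real.log q) ≤ q * (Q / q - 1) := h2
      _ = Q - q := by field_simp
  have key : p * Real.log P + q * Real.log Q ≤ p * Real.log p + q * Real.log q := by
    nlinarith [h1, h2]
  have : p*v + q*u - Real.log S = p * Real.log P + q * Real.log Q := by
    rw [hlogP, hlogQ]; linear_combination Real.log S * hpq
  linarith [key, this.le]

lemma comp_eq (a b τ x : ℝ) (hab : a < b)
    (hx : x = (a * Real.exp (a*τ) + b * Real.exp (b*τ)) / (Real.exp (a*τ) + Real.exp (b*τ))) :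
    ((x - a)/(b - a)) * Real.log ((x - a)/(b - a))
      + ((b - x)/(b - a)) * Real.log ((b - x)/(b - a))
      = x*τ - Real.log (Real.exp (a*τ) + Real.exp (b*τ)) := by
  set S := Real.exp (a*τ) + Real.exp (b*τ) with hS
  have hSpos : 0 < S := by positivity
  have hD : (0:ℝ) < b - a := by linarith
  have hP : (x - a)/(b - a) = Real.exp (b*τ) / S := by
    rw [hx]; field_simp; rw [hS]; ring_nf
  have hQ : (b - x)/(b - a) = Real.exp (a*τ) / S := by
    rw [hx]; field_simp; ring
  have hlogP : Real.log (Real.exp (b*τ) / S) = b*τ - Real.log S := by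
    rw [Real.log_div (Real.exp_ne_zero _) hSpos.ne', Real.log_exp]
  have hlogQ : Real.log (Real.exp (a*τ) / S) = a*τ - Real.log S := by
    rw [Real.log_div (Real.exp_ne_zero _) hSpos.ne', Real.log_exp]
  rw [hP, hQ, hlogP, hlogQ, hx]
  field_simp
  rw [hS]; ring_nf

lemma comp_mem (a b τ : ℝ) (hab : a < b) :
    (a * Real.exp (a*τ) + b * Real.exp (b*τ)) / (Real.exp (a*τ) + Real.exp (b*τ))
      ∈ Set.Ioo a b := by
  have h1 : 0 < Real.exp (a*τ) := Real.exp_pos _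
  have h2 : 0 < Real.exp (b*τ) := Real.exp_pos _
  have hS : 0 < Real.exp (a*τ) + Real.exp (b*τ) := by positivity
  constructor
  · rw [lt_div_iff₀ hS]; nlinarith
  · rw [div_lt_iff₀ hS]; nlinarith

lemma deriv_log_term (a b τ c : ℝ) :
    HasDerivAt (fun t : ℝ => Real.log (Real.exp (a*(τ + t*c)) + Real.exp (b*(τ + t*c))))
      (c * ((a * Real.exp (a*τ) + b * Real.exp (b*τ)) / (Real.exp (a*τ) + Real.exp (b*τ)))) 0 := by
  have hlin : ∀ r : ℝ, HasDerivAt (fun t : ℝ => r*(τ + t*c)) (r*c) 0 := by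
    intro r
    have : HasDerivAt (fun t : ℝ => τ + t*c) c 0 := by
      simpa using ((hasDerivAt_id (0:ℝ)).mul_const c).const_add τ
    simpa [mul_comm] using this.const_mul r
  have ha : HasDerivAt (fun t : ℝ => Real.exp (a*(τ + t*c)))
      (a*c * Real.exp (a*τ)) 0 := by
    simpa [mul_comm] using (hlin a).exp
  have hb : HasDerivAt (fun t : ℝ => Real.exp (b*(τ + t*c)))
      (b*c * Real.exp (b*τ)) 0 := by
    simpa [mul_comm] using (hlin b).exp
  have hsum := ha.add hb
  have hne : Real.exp (a*(τ + 0*c)) + Real.exp (b*(τ + 0*c)) ≠ 0 := by positivity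
  have := hsum.log hne
  simp only [Pi.add_apply, zero_mul, mul_zero, add_zero] at this ⊢
  convert this using 1
  have hS : Real.exp (a*τ) + Real.exp (b*τ) > 0 := by positivity
  field_simp

/-- **Duality for entropy minimization.** If `λ*` maximizes
`Σ(y,λ) = ⟨λ,y⟩ − M(Aᵗλ)` over `ℝ^N`, then the entropic reconstruction `x*` lies in the open
box, satisfies `A x* = y`, minimizes `Ψ` over `{x ∈ ∏(a_j,b_j) : Ax = y}`, and
`Ψ(x*) = Σ(y,λ*)`. -/
theorem stmt_12 (N m : ℕ) (A : Matrix (Fin N) (Fin m) ℝ) (y : Fin N → ℝ)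
    (a b : Fin m → ℝ) (hab : ∀ j, a j < b j)
    (M : (Fin m → ℝ) → ℝ)
    (hM : ∀ τ, M τ = ∑ j, Real.log (Real.exp (a j * τ j) + Real.exp (b j * τ j)))
    (Psi : (Fin m → ℝ) → ℝ)
    (hPsi : ∀ x, Psi x = ∑ j,
      (((x j - a j) / (b j - a j)) * Real.log ((x j - a j) / (b j - a j))
        + ((b j - x j) / (b j - a j)) * Real.log ((b j - x j) / (b j - a j))))
    (Sig : (Fin N → ℝ) → ℝ)
    (hSig : ∀ lam, Sig lam = (∑ i, lam i * y i) - M (Aᵀ *ᵥ lam))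
    (lamStar : Fin N → ℝ)
    (hmax : ∀ lam, Sig lam ≤ Sig lamStar)
    (xStar : Fin m → ℝ)
    (hx : ∀ j, xStar j =
      (a j * Real.exp (a j * (Aᵀ *ᵥ lamStar) j) + b j * Real.exp (b j * (Aᵀ *ᵥ lamStar) j))
        / (Real.exp (a j * (Aᵀ *ᵥ lamStar) j) + Real.exp (b j * (Aᵀ *ᵥ lamStar) j))) :
    (∀ j, xStar j ∈ Set.Ioo (a j) (b j)) ∧ A.mulVec xStar = y ∧
      (∀ x : Fin m → ℝ, (∀ j, x j ∈ Set.Ioo (a j) (b j)) → A.mulVec x = y →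
        Psi xStar ≤ Psi x) ∧
      Psi xStar = Sig lamStar := by
  set τ : Fin m → ℝ := Aᵀ *ᵥ lamStar with hτ
  -- box membership
  have hbox : ∀ j, xStar j ∈ Set.Ioo (a j) (b j) := by
    intro j; rw [hx j]; exact comp_mem _ _ _ (hab j)
  -- shift formula
  have hshift : ∀ (t : ℝ) (i : Fin N) (j : Fin m),
      (Aᵀ *ᵥ (lamStar + t • (Pi.single i (1:ℝ) : Fin N → ℝ))) j = τ j + t * A i j := by
    intro t i j
    simp only [hτ, Matrix.mulVec, dotProduct, Matrix.transpose_apply, Pi.add_apply,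
      Pi.smul_apply, Pi.single_apply, smul_eq_mul, mul_add]
    rw [Finset.sum_add_distrib]
    congr 1
    simp [mul_ite, Finset.mul_sum]
    ring
  -- stationarity: A xStar = y
  have hAx : A.mulVec xStar = y := by
    funext i
    set g : ℝ → ℝ := fun t => (∑ k, lamStar k * y k) + t * y i -
      ∑ j, Real.log (Real.exp (a j * (τ j + t * A i j)) + Real.exp (b j * (τ j + t * A i j)))
      with hg
    have hgval : ∀ t, Sig (lamStar + t • (Pi.single i (1:ℝ) : Fin N → ℝ)) = g t := by
      intro t
      rw [hSig, hM, hg]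
      congr 1
      · simp only [Pi.add_apply, Pi.smul_apply, Pi.single_apply, smul_eq_mul, add_mul]
        rw [Finset.sum_add_distrib]
        congr 1
        simp [ite_mul]
      · apply Finset.sum_congr rfl
        intro j _
        rw [hshift t i j]
    have hle : ∀ t, g t ≤ g 0 := by
      intro t
      rw [← hgval t, ← hgval 0]
      have h0 : lamStar + (0:ℝ) • (Pi.single i (1:ℝ) : Fin N → ℝ) = lamStar := by simp
      rw [h0]
      exact hmax _
    have hder : HasDerivAt g (y i - ∑ j, A i j * xStar j) 0 := by
      have hA : HasDerivAt (fun t : ℝ => (∑ k, lamStar k * y k) + t * y i)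
          (y i) 0 := by
        simpa using ((hasDerivAt_id (0:ℝ)).mul_const (y i)).const_add (∑ k, lamStar k * y k)
      have hB : HasDerivAt (fun t : ℝ => ∑ j, Real.log
          (Real.exp (a j * (τ j + t * A i j)) + Real.exp (b j * (τ j + t * A i j))))
          (∑ j, A i j * xStar j) 0 := by
        have := HasDerivAt.fun_sum (fun j (_ : j ∈ Finset.univ) =>
          deriv_log_term (a j) (b j) (τ j) (A i j))
        refine this.congr_deriv ?_
        refine Finset.sum_congr rfl (fun j _ => ?_)
        rw [hx j]
      exact hA.sub hB
    have hloc : IsLocalMax g 0 := Filter.Eventually.of_forall hle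
    have hzero : y i - ∑ j, A i j * xStar j = 0 := hloc.hasDerivAt_eq_zero hder
    show (A.mulVec xStar) i = y i
    simp only [Matrix.mulVec, dotProduct]
    linarith
  -- value identity
  have hval : Psi xStar = (∑ j, xStar j * τ j) - M τ := by
    rw [hPsi, hM]
    rw [← Finset.sum_sub_distrib]
    apply Finset.sum_congr rfl
    intro j _
    exact comp_eq (a j) (b j) (τ j) (xStar j) (hab j) (hx j)
  -- dot-product transposition
  have hdot : ∀ x : Fin m → ℝ, ∑ j, x j * τ j = ∑ i, lamStar i * (A.mulVec x) i := by
    intro x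
    simp only [hτ, Matrix.mulVec, dotProduct, Matrix.transpose_apply, Finset.mul_sum]
    rw [Finset.sum_comm]
    apply Finset.sum_congr rfl
    intro i _
    apply Finset.sum_congr rfl
    intro j _
    ring
  have hPsiSig : Psi xStar = Sig lamStar := by
    rw [hval, hSig, hdot xStar, hAx, ← hτ]
  refine ⟨hbox, hAx, ?_, hPsiSig⟩
  intro x hxbox hxA
  rw [hPsiSig, hSig, hPsi, ← hτ]
  have hge : ∀ j, x j * τ j - Real.log (Real.exp (a j * τ j) + Real.exp (b j * τ j)) ≤
      ((x j - a j) / (b j - a j)) * Real.log ((x j - a j) / (b j - a j))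
        + ((b j - x j) / (b j - a j)) * Real.log ((b j - x j) / (b j - a j)) := by
    intro j
    have hD : (0:ℝ) < b j - a j := by linarith [hab j]
    have hp : 0 < (x j - a j) / (b j - a j) := div_pos (by linarith [(hxbox j).1]) hD
    have hq : 0 < (b j - x j) / (b j - a j) := div_pos (by linarith [(hxbox j).2]) hD
    have hpq : (x j - a j) / (b j - a j) + (b j - x j) / (b j - a j) = 1 := by
      field_simp; ring
    have := gibbs ((x j - a j) / (b j - a j)) ((b j - x j) / (b j - a j))
      (a j * τ j) (b j * τ j) hp hq hpq
    have hlin : (x j - a j) / (b j - a j) * (b j * τ j)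
        + (b j - x j) / (b j - a j) * (a j * τ j) = x j * τ j := by
      field_simp
      ring
    linarith [this, hlin.ge]
  have hsum : ∑ j, (x j * τ j - Real.log (Real.exp (a j * τ j) + Real.exp (b j * τ j)))
      ≤ ∑ j, (((x j - a j) / (b j - a j)) * Real.log ((x j - a j) / (b j - a j))
        + ((b j - x j) / (b j - a j)) * Real.log ((b j - x j) / (b j - a j))) :=
    Finset.sum_le_sum (fun j _ => hge j)
  rw [Finset.sum_sub_distrib] at hsum
  rw [hM]
  have hdx := hdot x
  rw [hxA] at hdx
  linarith [hsum, hdx.ge]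
end
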